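/- If (Bₙ) is a sequence as above with every nonempty open set containing some Bₙ and the Bₙ pairwise disjoint nonempty closed sets, then B = ⋃ₙ Bₙ is meager in ℝ. -/
import Mathlib


/-- If `(Bₙ)` is a sequence of pairwise disjoint nonempty closed subsets of `ℝ` such that every
nonempty open subset of `ℝ` includes some `Bₙ`, then `⋃ₙ Bₙ` is meager in `ℝ`. -/
theorem union_of_locally_included_closed_sets_meagre
    (B : ℕ → Set ℝ) (hBc : ∀ n, IsClosed (B n)) (hBne : ∀ n, (B n).Nonempty)
    (hdisj : Pairwise fun m n => Disjoint (B m) (B n))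
    (hBdense : ∀ U : Set ℝ, IsOpen U → U.Nonempty → ∃ n, B n ⊆ U) :
    IsMeagre (⋃ n, B n) := by
  apply isMeagre_iUnion
  intro n
  have hnd : IsNowhereDense (B n) := by
    rw [(hBc n).isNowhereDense_iff]
    by_contra h
    obtain ⟨m, hm⟩ := hBdense (interior (B n)) isOpen_interior
      (Set.nonempty_iff_ne_empty.mpr h)
    rcases eq_or_ne m n with rfl | hne
    · have hopen : IsOpen (B m) :=
        interior_eq_iff_isOpen.mp (le_antisymm interior_subset hm)
      have huniv : B m = Set.univ := IsClopen.eq_univ ⟨hBc m, hopen⟩ (hBne m)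
      obtain ⟨x, hx⟩ := hBne (m + 1)
      exact (hdisj (Nat.succ_ne_self m)).ne_of_mem hx (huniv ▸ Set.mem_univ x) rfl
    · obtain ⟨x, hx⟩ := hBne m
      exact (hdisj hne).ne_of_mem hx (interior_subset (hm hx)) rfl
  rw [isMeagre_iff_countable_union_isNowhereDense]
  exact ⟨{B n}, by simpa using hnd, Set.countable_singleton _, by simp⟩
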